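/- Let μ ∈ Δ(S) and let τ ∈ T_μ attain the supremum sup_{τ' ∈ T_μ} ∫_{Δ(S)} W(ν) dτ'(ν). Suppose τ = r τ₁ + (1−r) τ₂ with r ∈ (0,1), τ₁ ∈ T_{μ₁}, τ₂ ∈ T_{μ₂} (so μ = r μ₁ + (1−r) μ₂). Then τ₁ attains sup_{τ' ∈ T_{μ₁}} ∫_{Δ(S)} W(ν) dτ'(ν) and τ₂ attains sup_{τ' ∈ T_{μ₂}} ∫_{Δ(S)} W(ν) dτ'(ν). -/

import Mathlib

open MeasureTheory Finset

noncomputable section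

/-- Expected utility `Σ_s u(s,a) ν(s)` of action `a` under belief `ν ∈ Δ(S)`. -/
def expUtil {S α : Type*} [Fintype S] (u : S → α → ℝ) (ν : stdSimplex ℝ S) (a : α) : ℝ :=
  ∑ s, u s a * (ν : S → ℝ) s

/-- Admissible (optimal) actions `A*(ν) = argmax_a Σ_s u(s,a) ν(s)`. -/
def admissible {S α : Type*} [Fintype S] (u : S → α → ℝ) (ν : stdSimplex ℝ S) : Set α :=
  {a | ∀ b, expUtil u ν b ≤ expUtil u ν a}

/-- The sender's gain
`W(ν) = Σ_t η(t) · max_{a ∈ A*_t(ν)} Σ_s v(s,a) ν(s)` (ties broken in the sender's favor);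
the maximum over the (finite nonempty) set of admissible action profiles is expressed as a
supremum. -/
def senderGain {S L : Type*} [Fintype S] [Fintype L] [DecidableEq L]
    {A T : L → Type*} [∀ l, Fintype (A l)] [∀ l, Fintype (T l)]
    (u : ∀ l, T l → S → A l → ℝ) (v : S → (∀ l, A l) → ℝ) (η : ∀ l, T l → ℝ)
    (ν : stdSimplex ℝ S) : ℝ :=
  ∑ t : ∀ l, T l, (∏ l, η l (t l)) *
    sSup {x : ℝ | ∃ a : ∀ l, A l, (∀ l, a l ∈ admissible (u l (t l)) ν) ∧
      x = ∑ s, v s a * (ν : S → ℝ) s}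

/-- `T_μ` : Borel probability measures on `Δ(S)` with barycenter `μ`, with the topology of
weak convergence. -/
def barycentric {S : Type*} [Fintype S] (μ : stdSimplex ℝ S) :
    Set (ProbabilityMeasure (stdSimplex ℝ S)) :=
  {τ | ∀ s : S, (∫ ν, (ν : S → ℝ) s ∂(τ : Measure (stdSimplex ℝ S))) = (μ : S → ℝ) s}

set_option linter.unusedSectionVars false

section Helpers

variable {S : Type*} [Fintype S] [Nonempty S]
  {L : Type*} [Fintype L] [DecidableEq L]
  {A : L → Type*} [∀ l, Fintype (A l)] [∀ l, Nonempty (A l)]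
  {T : L → Type*} [∀ l, Fintype (T l)] [∀ l, Nonempty (T l)]

lemma admissible_nonempty {α : Type*} [Fintype α] [Nonempty α]
    (u : S → α → ℝ) (ν : stdSimplex ℝ S) : (admissible u ν).Nonempty := by
  obtain ⟨a, -, ha⟩ := Finset.exists_max_image (univ : Finset α) (expUtil u ν) univ_nonempty
  exact ⟨a, fun b => ha b (mem_univ b)⟩

lemma simplex_coord_nonneg (ν : stdSimplex ℝ S) (s : S) : 0 ≤ (ν : S → ℝ) s := ν.2.1 s

lemma simplex_coord_le_one (ν : stdSimplex ℝ S) (s : S) : (ν : S → ℝ) s ≤ 1 := by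
  have h := Finset.single_le_sum (f := (ν : S → ℝ)) (fun i _ => ν.2.1 i) (mem_univ s)
  exact h.trans (le_of_eq ν.2.2)

lemma continuous_coord (s : S) : Continuous fun ν : stdSimplex ℝ S => (ν : S → ℝ) s :=
  (continuous_apply s).comp continuous_subtype_val

lemma continuous_expUtil {α : Type*} (u : S → α → ℝ) (a : α) :
    Continuous fun ν : stdSimplex ℝ S => expUtil u ν a := by
  unfold expUtil
  exact continuous_finset_sum _ fun s _ => (continuous_const.mul (continuous_coord s))

lemma continuous_payoff (v : S → (∀ l, A l) → ℝ) (a : ∀ l, A l) :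
    Continuous fun ν : stdSimplex ℝ S => ∑ s, v s a * (ν : S → ℝ) s :=
  continuous_finset_sum _ fun s _ => (continuous_const.mul (continuous_coord s))

lemma gset_eq_image (w : ∀ l, S → A l → ℝ) (v : S → (∀ l, A l) → ℝ) (ν : stdSimplex ℝ S) :
    {x : ℝ | ∃ a : ∀ l, A l, (∀ l, a l ∈ admissible (w l) ν) ∧
        x = ∑ s, v s a * (ν : S → ℝ) s} =
      (fun a : ∀ l, A l => ∑ s, v s a * (ν : S → ℝ) s) ''
        {a | ∀ l, a l ∈ admissible (w l) ν} := by
  ext x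
  constructor
  · rintro ⟨a, ha, rfl⟩; exact ⟨a, ha, rfl⟩
  · rintro ⟨a, ha, rfl⟩; exact ⟨a, ha, rfl⟩

lemma gset_nonempty (w : ∀ l, S → A l → ℝ) (v : S → (∀ l, A l) → ℝ) (ν : stdSimplex ℝ S) :
    {x : ℝ | ∃ a : ∀ l, A l, (∀ l, a l ∈ admissible (w l) ν) ∧
        x = ∑ s, v s a * (ν : S → ℝ) s}.Nonempty := by
  refine ⟨_, fun l => (admissible_nonempty (w l) ν).choose, fun l =>
    (admissible_nonempty (w l) ν).choose_spec, rfl⟩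

lemma gset_finite (w : ∀ l, S → A l → ℝ) (v : S → (∀ l, A l) → ℝ) (ν : stdSimplex ℝ S) :
    {x : ℝ | ∃ a : ∀ l, A l, (∀ l, a l ∈ admissible (w l) ν) ∧
        x = ∑ s, v s a * (ν : S → ℝ) s}.Finite := by
  rw [gset_eq_image]
  exact (Set.toFinite _).image _

lemma measurable_gsSup (w : ∀ l, S → A l → ℝ) (v : S → (∀ l, A l) → ℝ) :
    Measurable fun ν : stdSimplex ℝ S =>
      sSup {x : ℝ | ∃ a : ∀ l, A l, (∀ l, a l ∈ admissible (w l) ν) ∧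
        x = ∑ s, v s a * (ν : S → ℝ) s} := by
  apply measurable_of_Ioi
  intro c
  have : (fun ν : stdSimplex ℝ S =>
      sSup {x : ℝ | ∃ a : ∀ l, A l, (∀ l, a l ∈ admissible (w l) ν) ∧
        x = ∑ s, v s a * (ν : S → ℝ) s}) ⁻¹' Set.Ioi c =
      ⋃ a : ∀ l, A l, ({ν : stdSimplex ℝ S | ∀ l, a l ∈ admissible (w l) ν} ∩
        {ν : stdSimplex ℝ S | c < ∑ s, v s a * (ν : S → ℝ) s}) := by
    ext ν
    simp only [Set.mem_preimage, Set.mem_Ioi, Set.mem_iUnion, Set.mem_inter_iff,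
      Set.mem_setOf_eq]
    constructor
    · intro h
      obtain ⟨a, ha, hx⟩ := (gset_nonempty w v ν).csSup_mem (gset_finite w v ν)
      exact ⟨a, ha, hx ▸ h⟩
    · rintro ⟨a, ha, hc⟩
      exact hc.trans_le (le_csSup (gset_finite w v ν).bddAbove ⟨a, ha, rfl⟩)
  rw [this]
  refine MeasurableSet.iUnion fun a => (MeasurableSet.inter ?_ ?_)
  · have : {ν : stdSimplex ℝ S | ∀ l, a l ∈ admissible (w l) ν} =
        ⋂ l, ⋂ b, {ν : stdSimplex ℝ S | expUtil (w l) ν b ≤ expUtil (w l) ν (a l)} := by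
      ext ν; simp [admissible]
    rw [this]
    exact MeasurableSet.iInter fun l => MeasurableSet.iInter fun b =>
      (isClosed_le (continuous_expUtil (w l) b) (continuous_expUtil (w l) (a l))).measurableSet
  · exact measurableSet_lt measurable_const (continuous_payoff v a).measurable

variable (u : ∀ l, T l → S → A l → ℝ) (v : S → (∀ l, A l) → ℝ) (η : ∀ l, T l → ℝ)

lemma measurable_senderGain : Measurable (senderGain (S := S) u v η) := by
  unfold senderGain
  exact Finset.measurable_sum _ fun t _ =>
    (measurable_gsSup (fun l => u l (t l)) v).const_mul _

/-- Uniform bound on the payoff. -/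
def payoffBound : ℝ := ∑ s, (univ : Finset (∀ l, A l)).sup' univ_nonempty (fun a => |v s a|)

lemma abs_payoff_le (a : ∀ l, A l) (ν : stdSimplex ℝ S) :
    |∑ s, v s a * (ν : S → ℝ) s| ≤ payoffBound (A := A) v := by
  refine (Finset.abs_sum_le_sum_abs _ _).trans (Finset.sum_le_sum fun s _ => ?_)
  rw [abs_mul, abs_of_nonneg (simplex_coord_nonneg ν s)]
  calc |v s a| * (ν : S → ℝ) s ≤ |v s a| * 1 :=
        mul_le_mul_of_nonneg_left (simplex_coord_le_one ν s) (abs_nonneg _)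
    _ = |v s a| := mul_one _
    _ ≤ _ := Finset.le_sup' (fun a => |v s a|) (mem_univ a)

lemma abs_senderGain_le (hη : ∀ l, η l ∈ stdSimplex ℝ (T l)) (ν : stdSimplex ℝ S) :
    |senderGain u v η ν| ≤ payoffBound (A := A) v := by
  unfold senderGain
  have key : ∀ t : ∀ l, T l,
      |(∏ l, η l (t l)) * sSup {x : ℝ | ∃ a : ∀ l, A l,
          (∀ l, a l ∈ admissible (u l (t l)) ν) ∧ x = ∑ s, v s a * (ν : S → ℝ) s}| ≤
        (∏ l, η l (t l)) * payoffBound (A := A) v := by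
    intro t
    have hprod : 0 ≤ ∏ l, η l (t l) := Finset.prod_nonneg fun l _ => (hη l).1 (t l)
    rw [abs_mul, abs_of_nonneg hprod]
    refine mul_le_mul_of_nonneg_left ?_ hprod
    obtain ⟨a, ha, hx⟩ := (gset_nonempty (fun l => u l (t l)) v ν).csSup_mem
      (gset_finite (fun l => u l (t l)) v ν)
    rw [hx]
    exact abs_payoff_le v a ν
  calc |∑ t : ∀ l, T l, _| ≤ ∑ t : ∀ l, T l, _ := Finset.abs_sum_le_sum_abs _ _
    _ ≤ ∑ t : ∀ l, T l, (∏ l, η l (t l)) * payoffBound (A := A) v :=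
        Finset.sum_le_sum fun t _ => key t
    _ = (∑ t : ∀ l, T l, ∏ l, η l (t l)) * payoffBound (A := A) v := by
        rw [← Finset.sum_mul]
    _ = 1 * payoffBound (A := A) v := by
        congr 1
        rw [← Fintype.piFinset_univ, ← Finset.prod_univ_sum]
        exact Finset.prod_eq_one fun l _ => (hη l).2
    _ = _ := one_mul _


lemma integrable_senderGain (hη : ∀ l, η l ∈ stdSimplex ℝ (T l))
    (P : Measure (stdSimplex ℝ S)) [IsProbabilityMeasure P] :
    Integrable (senderGain u v η) P :=
  ⟨(measurable_senderGain u v η).aestronglyMeasurable,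
    HasFiniteIntegral.of_bounded (C := payoffBound (A := A) v)
      (ae_of_all _ fun ν => by
        simpa [Real.norm_eq_abs] using abs_senderGain_le u v η hη ν)⟩

lemma integral_senderGain_le (hη : ∀ l, η l ∈ stdSimplex ℝ (T l))
    (P : Measure (stdSimplex ℝ S)) [IsProbabilityMeasure P] :
    ∫ ν, senderGain u v η ν ∂P ≤ payoffBound (A := A) v := by
  have h := norm_integral_le_of_norm_le_const (μ := P) (f := senderGain u v η)
    (ae_of_all _ fun ν => by simpa [Real.norm_eq_abs] using abs_senderGain_le u v η hη ν)
  rw [probReal_univ, mul_one] at h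
  exact (le_abs_self _).trans (by simpa [Real.norm_eq_abs] using h)

lemma integrable_coord (P : Measure (stdSimplex ℝ S)) [IsProbabilityMeasure P] (s : S) :
    Integrable (fun ν : stdSimplex ℝ S => (ν : S → ℝ) s) P :=
  ⟨(continuous_coord s).measurable.aestronglyMeasurable,
    HasFiniteIntegral.of_bounded (C := 1) (ae_of_all _ fun ν => by
      rw [Real.norm_eq_abs, abs_of_nonneg (simplex_coord_nonneg ν s)]
      exact simplex_coord_le_one ν s)⟩

lemma aux_decomposition (hη : ∀ l, η l ∈ stdSimplex ℝ (T l))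
    (μ μ₁ μ₂ : stdSimplex ℝ S)
    (τ τ₁ τ₂ : ProbabilityMeasure (stdSimplex ℝ S)) (r : ℝ) (hr0 : 0 < r) (hr1 : r < 1)
    (hτ₁ : τ₁ ∈ barycentric μ₁) (hτ₂ : τ₂ ∈ barycentric μ₂)
    (hmix : (τ : Measure (stdSimplex ℝ S)) =
      ENNReal.ofReal r • (τ₁ : Measure (stdSimplex ℝ S)) +
        ENNReal.ofReal (1 - r) • (τ₂ : Measure (stdSimplex ℝ S)))
    (hμmix : (μ : S → ℝ) = r • (μ₁ : S → ℝ) + (1 - r) • (μ₂ : S → ℝ))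
    (hopt : (∫ ν, senderGain u v η ν ∂(τ : Measure (stdSimplex ℝ S))) =
      sSup {x : ℝ | ∃ τ' ∈ barycentric μ,
        x = ∫ ν, senderGain u v η ν ∂(τ' : Measure (stdSimplex ℝ S))}) :
    (∫ ν, senderGain u v η ν ∂(τ₁ : Measure (stdSimplex ℝ S))) =
      sSup {x : ℝ | ∃ τ' ∈ barycentric μ₁,
        x = ∫ ν, senderGain u v η ν ∂(τ' : Measure (stdSimplex ℝ S))} := by
  have hr1' : (0 : ℝ) ≤ 1 - r := by linarith
  have hint : ∀ P : ProbabilityMeasure (stdSimplex ℝ S),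
      Integrable (senderGain u v η) (P : Measure (stdSimplex ℝ S)) :=
    fun P => integrable_senderGain u v η hη _
  have hmixint : ∀ P₁ P₂ : ProbabilityMeasure (stdSimplex ℝ S),
      (∫ ν, senderGain u v η ν ∂(ENNReal.ofReal r • (P₁ : Measure (stdSimplex ℝ S)) +
          ENNReal.ofReal (1 - r) • (P₂ : Measure (stdSimplex ℝ S)))) =
        r * (∫ ν, senderGain u v η ν ∂(P₁ : Measure (stdSimplex ℝ S))) +
        (1 - r) * (∫ ν, senderGain u v η ν ∂(P₂ : Measure (stdSimplex ℝ S))) := by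
    intro P₁ P₂
    rw [integral_add_measure ((hint P₁).smul_measure ENNReal.ofReal_ne_top)
        ((hint P₂).smul_measure ENNReal.ofReal_ne_top),
      integral_smul_measure, integral_smul_measure, ENNReal.toReal_ofReal hr0.le,
      ENNReal.toReal_ofReal hr1', smul_eq_mul, smul_eq_mul]
  have hbdd : ∀ μ' : stdSimplex ℝ S, BddAbove {x : ℝ | ∃ τ' ∈ barycentric μ',
      x = ∫ ν, senderGain u v η ν ∂(τ' : Measure (stdSimplex ℝ S))} := by
    intro μ'
    refine ⟨payoffBound (A := A) v, ?_⟩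
    rintro x ⟨τ', -, rfl⟩
    exact integral_senderGain_le u v η hη _
  have hIτ : (∫ ν, senderGain u v η ν ∂(τ : Measure (stdSimplex ℝ S))) =
      r * (∫ ν, senderGain u v η ν ∂(τ₁ : Measure (stdSimplex ℝ S))) +
      (1 - r) * (∫ ν, senderGain u v η ν ∂(τ₂ : Measure (stdSimplex ℝ S))) := by
    rw [hmix]; exact hmixint τ₁ τ₂
  refine le_antisymm (le_csSup (hbdd μ₁) ⟨τ₁, hτ₁, rfl⟩) (csSup_le ⟨_, τ₁, hτ₁, rfl⟩ ?_)
  rintro x ⟨τ', hτ', rfl⟩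
  set ρ : Measure (stdSimplex ℝ S) :=
    ENNReal.ofReal r • (τ' : Measure (stdSimplex ℝ S)) +
      ENNReal.ofReal (1 - r) • (τ₂ : Measure (stdSimplex ℝ S)) with hρ
  have hρprob : IsProbabilityMeasure ρ := by
    constructor
    rw [hρ, Measure.add_apply, Measure.smul_apply, Measure.smul_apply, measure_univ,
      measure_univ, smul_eq_mul, smul_eq_mul, mul_one, mul_one,
      ← ENNReal.ofReal_add hr0.le hr1']
    norm_num
  set ρP : ProbabilityMeasure (stdSimplex ℝ S) := ⟨ρ, hρprob⟩ with hρP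
  have hρbar : ρP ∈ barycentric μ := by
    intro s
    show (∫ ν, (ν : S → ℝ) s ∂ρ) = (μ : S → ℝ) s
    rw [hρ, integral_add_measure ((integrable_coord _ s).smul_measure ENNReal.ofReal_ne_top)
        ((integrable_coord _ s).smul_measure ENNReal.ofReal_ne_top),
      integral_smul_measure, integral_smul_measure, ENNReal.toReal_ofReal hr0.le,
      ENNReal.toReal_ofReal hr1', smul_eq_mul, smul_eq_mul, hτ' s, hτ₂ s]
    have := congrFun hμmix s
    simp only [Pi.add_apply, Pi.smul_apply, smul_eq_mul] at this
    exact this.symm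
  have hle : (∫ ν, senderGain u v η ν ∂ρ) ≤
      ∫ ν, senderGain u v η ν ∂(τ : Measure (stdSimplex ℝ S)) := by
    rw [hopt]
    exact le_csSup (hbdd μ) ⟨ρP, hρbar, rfl⟩
  rw [hρ] at hle
  rw [hmixint τ' τ₂, hIτ] at hle
  have : r * (∫ ν, senderGain u v η ν ∂(τ' : Measure (stdSimplex ℝ S))) ≤
      r * (∫ ν, senderGain u v η ν ∂(τ₁ : Measure (stdSimplex ℝ S))) := by linarith
  exact le_of_mul_le_mul_left this hr0

end Helpers

/-- **decomposition lemma.** If `τ ∈ T_μ` attains `sup_{τ' ∈ T_μ} ∫ W dτ'` and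
`τ = r τ₁ + (1−r) τ₂` with `r ∈ (0,1)`, `τ₁ ∈ T_{μ₁}`, `τ₂ ∈ T_{μ₂}` (so that
`μ = r μ₁ + (1−r) μ₂`), then `τ₁` and `τ₂` attain the corresponding suprema over `T_{μ₁}`
and `T_{μ₂}`. -/
theorem optimal_decomposition {S : Type*} [Fintype S] [Nonempty S]
    {L : Type*} [Fintype L] [DecidableEq L]
    {A : L → Type*} [∀ l, Fintype (A l)] [∀ l, Nonempty (A l)]
    {T : L → Type*} [∀ l, Fintype (T l)] [∀ l, Nonempty (T l)]
    (u : ∀ l, T l → S → A l → ℝ) (v : S → (∀ l, A l) → ℝ)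
    (η : ∀ l, T l → ℝ) (hη : ∀ l, η l ∈ stdSimplex ℝ (T l))
    (μ μ₁ μ₂ : stdSimplex ℝ S)
    (τ τ₁ τ₂ : ProbabilityMeasure (stdSimplex ℝ S)) (r : ℝ) (hr0 : 0 < r) (hr1 : r < 1)
    (hτ : τ ∈ barycentric μ) (hτ₁ : τ₁ ∈ barycentric μ₁) (hτ₂ : τ₂ ∈ barycentric μ₂)
    (hmix : (τ : Measure (stdSimplex ℝ S)) =
      ENNReal.ofReal r • (τ₁ : Measure (stdSimplex ℝ S)) +
        ENNReal.ofReal (1 - r) • (τ₂ : Measure (stdSimplex ℝ S)))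
    (hμmix : (μ : S → ℝ) = r • (μ₁ : S → ℝ) + (1 - r) • (μ₂ : S → ℝ))
    (hopt : (∫ ν, senderGain u v η ν ∂(τ : Measure (stdSimplex ℝ S))) =
      sSup {x : ℝ | ∃ τ' ∈ barycentric μ,
        x = ∫ ν, senderGain u v η ν ∂(τ' : Measure (stdSimplex ℝ S))}) :
    ((∫ ν, senderGain u v η ν ∂(τ₁ : Measure (stdSimplex ℝ S))) =
      sSup {x : ℝ | ∃ τ' ∈ barycentric μ₁,
        x = ∫ ν, senderGain u v η ν ∂(τ' : Measure (stdSimplex ℝ S))}) ∧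
    ((∫ ν, senderGain u v η ν ∂(τ₂ : Measure (stdSimplex ℝ S))) =
      sSup {x : ℝ | ∃ τ' ∈ barycentric μ₂,
        x = ∫ ν, senderGain u v η ν ∂(τ' : Measure (stdSimplex ℝ S))}) := by
  constructor
  · exact aux_decomposition u v η hη μ μ₁ μ₂ τ τ₁ τ₂ r hr0 hr1 hτ₁ hτ₂ hmix hμmix hopt
  · refine aux_decomposition u v η hη μ μ₂ μ₁ τ τ₂ τ₁ (1 - r) (by linarith) (by linarith)
      hτ₂ hτ₁ ?_ ?_ hopt
    · rw [sub_sub_cancel, hmix, add_comm]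
    · rw [sub_sub_cancel, hμmix, add_comm]

end
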